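/- If P and Q are probability measures on a measure space with densities p, q with respect to μ, and Pⁿ, Qⁿ denote the n-fold product measures, then ∫ min(dPⁿ/dμⁿ, dQⁿ/dμⁿ) dμⁿ ≥ (1/2)·(1 - (1/2)H²(P,Q))^{2n}, where H² denotes the squared Hellinger distance. -/

import Mathlib

open MeasureTheory

private lemma sqrt_finset_prod {ι : Type*} (s : Finset ι) (f : ι → ℝ) (hf : ∀ i, 0 ≤ f i) :
    Real.sqrt (∏ i ∈ s, f i) = ∏ i ∈ s, Real.sqrt (f i) := by
  induction s using Finset.cons_induction with
  | empty => simp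
  | cons a s ha ih => rw [Finset.prod_cons, Finset.prod_cons, Real.sqrt_mul (hf a), ih]

/-- `‖Pⁿ ∧ Qⁿ‖ ≥ (1/2)(1 - H²(P,Q)/2)^{2n}` for the `n`-fold product densities. -/
theorem min_product_density_ge {M : Type*} [MeasurableSpace M] (μ : Measure M) [SigmaFinite μ]
    (p q : M → ℝ) (hp0 : ∀ x, 0 ≤ p x) (hq0 : ∀ x, 0 ≤ q x)
    (hp : Integrable p μ) (hq : Integrable q μ)
    (hp1 : ∫ x, p x ∂μ = 1) (hq1 : ∫ x, q x ∂μ = 1)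
    (hpm : Measurable p) (hqm : Measurable q) (n : ℕ) :
    (1 / 2) * (1 - (1 / 2) * ∫ x, (Real.sqrt (p x) - Real.sqrt (q x)) ^ 2 ∂μ) ^ (2 * n)
      ≤ ∫ x, min (∏ i, p (x i)) (∏ i, q (x i)) ∂(Measure.pi fun _ : Fin n => μ) := by
  letI : MeasureSpace M := ⟨μ⟩
  haveI : SigmaFinite (volume : Measure M) := ‹SigmaFinite μ›
  have hvol : (volume : Measure (Fin n → M)) = Measure.pi fun _ : Fin n => μ := volume_pi
  set ν : Measure (Fin n → M) := Measure.pi fun _ : Fin n => μ with hν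
  set F : (Fin n → M) → ℝ := fun x => ∏ i, p (x i) with hF
  set G : (Fin n → M) → ℝ := fun x => ∏ i, q (x i) with hG
  set A : ℝ := ∫ x, Real.sqrt (p x) * Real.sqrt (q x) ∂μ with hA
  -- integrability of √p √q
  have hsq_nonneg : ∀ x, 0 ≤ Real.sqrt (p x) * Real.sqrt (q x) := fun x =>
    mul_nonneg (Real.sqrt_nonneg _) (Real.sqrt_nonneg _)
  have hμvol : (volume : Measure M) = μ := rfl
  have hpq_int : Integrable (fun x => Real.sqrt (p x) * Real.sqrt (q x)) μ := by
    refine Integrable.mono ((hp.add hq).div_const 2) ?_ ?_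
    · exact (hpm.sqrt.mul hqm.sqrt).aestronglyMeasurable
    · filter_upwards with x
      simp only [Pi.add_apply]
      rw [Real.norm_of_nonneg (hsq_nonneg x), Real.norm_of_nonneg
        (by have := hp0 x; have := hq0 x; positivity)]
      nlinarith [Real.sq_sqrt (hp0 x), Real.sq_sqrt (hq0 x),
        sq_nonneg (Real.sqrt (p x) - Real.sqrt (q x))]
  have hA0 : 0 ≤ A := integral_nonneg hsq_nonneg
  -- relation to the Hellinger distance
  have hppq : Integrable (fun x => p x + q x) μ := hp.add hq
  have hH : 1 - (1 / 2) * ∫ x, (Real.sqrt (p x) - Real.sqrt (q x)) ^ 2 ∂μ = A := by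
    have heq : (fun x => (Real.sqrt (p x) - Real.sqrt (q x)) ^ 2)
        = fun x => (p x + q x) - 2 * (Real.sqrt (p x) * Real.sqrt (q x)) := by
      funext x
      have hpx := Real.sq_sqrt (hp0 x)
      have hqx := Real.sq_sqrt (hq0 x)
      linear_combination hpx + hqx
    rw [heq, integral_sub hppq (hpq_int.const_mul 2), integral_add hp hq, hp1, hq1,
      integral_const_mul, ← hA]
    ring
  rw [hH]
  -- integrability on the product space
  have hFmeas : Measurable F := Finset.measurable_prod _ fun i _ => hpm.comp (measurable_pi_apply i)
  have hGmeas : Measurable G := Finset.measurable_prod _ fun i _ => hqm.comp (measurable_pi_apply i)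
  have hF0 : ∀ x, 0 ≤ F x := fun x => Finset.prod_nonneg fun i _ => hp0 _
  have hG0 : ∀ x, 0 ≤ G x := fun x => Finset.prod_nonneg fun i _ => hq0 _
  have hFint : Integrable F ν := by
    rw [← hvol]; exact Integrable.fintype_prod (f := fun _ : Fin n => p) fun _ => hp
  have hGint : Integrable G ν := by
    rw [← hvol]; exact Integrable.fintype_prod (f := fun _ : Fin n => q) fun _ => hq
  have hFone : ∫ x, F x ∂ν = 1 := by
    rw [← hvol]
    have h := integral_fintype_prod_eq_pow (ι := Fin n) (E := M) (μ := (volume : Measure M)) p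
    simp only [hμvol, hp1, one_pow, Fintype.card_fin] at h
    simpa [hF, volume_pi, hμvol] using h
  have hGone : ∫ x, G x ∂ν = 1 := by
    rw [← hvol]
    have h := integral_fintype_prod_eq_pow (ι := Fin n) (E := M) (μ := (volume : Measure M)) q
    simp only [hμvol, hq1, one_pow, Fintype.card_fin] at h
    simpa [hG, volume_pi, hμvol] using h
  have hmin_int : Integrable (fun x => min (F x) (G x)) ν := hFint.inf hGint
  have hmax_int : Integrable (fun x => max (F x) (G x)) ν := hFint.sup hGint
  have hmin0 : ∀ x, 0 ≤ min (F x) (G x) := fun x => le_min (hF0 x) (hG0 x)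
  have hmax0 : ∀ x, 0 ≤ max (F x) (G x) := fun x => le_max_of_le_left (hF0 x)
  -- the product integral of √(pq) equals Aⁿ
  have hAn : ∫ x, (∏ i, (Real.sqrt (p (x i)) * Real.sqrt (q (x i)))) ∂ν = A ^ n := by
    rw [← hvol]
    have h := integral_fintype_prod_eq_pow (ι := Fin n) (E := M) (μ := (volume : Measure M))
      (fun y => Real.sqrt (p y) * Real.sqrt (q y))
    simp only [hμvol, Fintype.card_fin] at h
    simpa [← hA, volume_pi, hμvol] using h
  -- pointwise: ∏ √p √q = √(min) √(max)
  have hpt : ∀ x, (∏ i, (Real.sqrt (p (x i)) * Real.sqrt (q (x i))))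
      = Real.sqrt (min (F x) (G x)) * Real.sqrt (max (F x) (G x)) := by
    intro x
    have h1 : (∏ i, (Real.sqrt (p (x i)) * Real.sqrt (q (x i))))
        = Real.sqrt (F x) * Real.sqrt (G x) := by
      rw [Finset.prod_mul_distrib, hF, hG,
        sqrt_finset_prod _ _ fun i => hp0 (x i), sqrt_finset_prod _ _ fun i => hq0 (x i)]
    rw [h1]
    rcases le_total (F x) (G x) with h | h
    · rw [min_eq_left h, max_eq_right h]
    · rw [min_eq_right h, max_eq_left h, mul_comm]
  -- Memℒp facts for Cauchy–Schwarz
  have h2 : (ENNReal.ofReal 2) = (2 : ENNReal) := by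
    rw [ENNReal.ofReal_ofNat]
  have hmem_min : MemLp (fun x => Real.sqrt (min (F x) (G x))) (ENNReal.ofReal 2) ν := by
    rw [h2, memLp_two_iff_integrable_sq ((hFmeas.min hGmeas).sqrt.aestronglyMeasurable)]
    have : (fun x => Real.sqrt (min (F x) (G x)) ^ 2) = fun x => min (F x) (G x) := by
      funext x; exact Real.sq_sqrt (hmin0 x)
    rw [this]; exact hmin_int
  have hmem_max : MemLp (fun x => Real.sqrt (max (F x) (G x))) (ENNReal.ofReal 2) ν := by
    rw [h2, memLp_two_iff_integrable_sq ((hFmeas.max hGmeas).sqrt.aestronglyMeasurable)]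
    have : (fun x => Real.sqrt (max (F x) (G x)) ^ 2) = fun x => max (F x) (G x) := by
      funext x; exact Real.sq_sqrt (hmax0 x)
    rw [this]; exact hmax_int
  have hconj : (2 : ℝ).HolderConjugate 2 := ⟨by norm_num, by norm_num, by norm_num⟩
  have hCS := integral_mul_le_Lp_mul_Lq_of_nonneg (μ := ν) hconj
    (Filter.Eventually.of_forall fun x => Real.sqrt_nonneg (min (F x) (G x)))
    (Filter.Eventually.of_forall fun x => Real.sqrt_nonneg (max (F x) (G x)))
    hmem_min hmem_max
  -- simplify the rpow expressions in hCS
  have hrw1 : ∫ x, Real.sqrt (min (F x) (G x)) ^ (2 : ℝ) ∂ν = ∫ x, min (F x) (G x) ∂ν := by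
    congr 1; funext x
    rw [show ((2 : ℝ) = ((2 : ℕ) : ℝ)) by norm_num, Real.rpow_natCast]
    exact Real.sq_sqrt (hmin0 x)
  have hrw2 : ∫ x, Real.sqrt (max (F x) (G x)) ^ (2 : ℝ) ∂ν = ∫ x, max (F x) (G x) ∂ν := by
    congr 1; funext x
    rw [show ((2 : ℝ) = ((2 : ℕ) : ℝ)) by norm_num, Real.rpow_natCast]
    exact Real.sq_sqrt (hmax0 x)
  have hlhs : ∫ x, Real.sqrt (min (F x) (G x)) * Real.sqrt (max (F x) (G x)) ∂ν = A ^ n := by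
    rw [← hAn]; congr 1; funext x; rw [hpt x]
  rw [hlhs, hrw1, hrw2] at hCS
  -- ∫ max = 2 - ∫ min
  have hFGsum : Integrable (fun x => F x + G x) ν := hFint.add hGint
  have hsum : ∫ x, max (F x) (G x) ∂ν = 2 - ∫ x, min (F x) (G x) ∂ν := by
    have heq : (fun x => max (F x) (G x)) = fun x => F x + G x - min (F x) (G x) := by
      funext x; rcases le_total (F x) (G x) with h | h
      · rw [max_eq_right h, min_eq_left h]; ring
      · rw [max_eq_left h, min_eq_right h]; ring
    rw [heq, integral_sub hFGsum hmin_int, integral_add hFint hGint, hFone, hGone]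
    ring
  set Imin : ℝ := ∫ x, min (F x) (G x) ∂ν with hImin
  have hImin0 : 0 ≤ Imin := integral_nonneg hmin0
  have hImin2 : Imin ≤ 2 := by
    have h0 : 0 ≤ ∫ x, max (F x) (G x) ∂ν := integral_nonneg hmax0
    rw [hsum] at h0; linarith
  rw [hsum] at hCS
  -- from hCS : A ^ n ≤ Imin ^ (1/2) * (2 - Imin) ^ (1/2), conclude
  have hb : Imin ^ ((1 : ℝ) / 2) * (2 - Imin) ^ ((1 : ℝ) / 2)
      ≤ Real.sqrt Imin * Real.sqrt 2 := by
    rw [← Real.sqrt_eq_rpow, ← Real.sqrt_eq_rpow]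
    exact mul_le_mul_of_nonneg_left (Real.sqrt_le_sqrt (by linarith)) (Real.sqrt_nonneg _)
  have hAn' : A ^ n ≤ Real.sqrt Imin * Real.sqrt 2 := le_trans hCS hb
  have hsq : (A ^ n) ^ 2 ≤ Imin * 2 := by
    have h1 : (A ^ n) ^ 2 ≤ (Real.sqrt Imin * Real.sqrt 2) ^ 2 := by
      apply pow_le_pow_left₀ (pow_nonneg hA0 n) hAn'
    calc (A ^ n) ^ 2 ≤ (Real.sqrt Imin * Real.sqrt 2) ^ 2 := h1
      _ = Imin * 2 := by
          rw [mul_pow, Real.sq_sqrt hImin0, Real.sq_sqrt (by norm_num : (0:ℝ) ≤ 2)]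
  have hpow : A ^ (2 * n) = (A ^ n) ^ 2 := by rw [mul_comm, pow_mul]
  rw [hpow]
  linarith
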